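/- Let b, d be real constants with b·x_0·y_{-1} ≠ 1 and d·x_{-1}·y_0 ≠ 1, and suppose (x_n)_{n≥-1}, (y_n)_{n≥-1} solve the constant-coefficient system with a = c = -1, with x_n ≠ 0 and y_n ≠ 0 for all n. Then for every n ≥ 0: x_{2n-1} = x_{-1}^{1-n}·(x_0·y_{-1}/y_0)^n·(-1 + b·x_0·y_{-1})^{-n}, x_{2n} = x_0^{n+1}·(y_{-1}/(x_{-1}·y_0))^n·(-1 + d·x_{-1}·y_0)^n, y_{2n-1} = y_{-1}^{1-n}·(x_{-1}·y_0/x_0)^n·(-1 + d·x_{-1}·y_0)^{-n}, and y_{2n} = y_0^{n+1}·(x_{-1}/(x_0·y_{-1}))^n·(-1 + b·x_0·y_{-1})^n, where negative exponents denote integer powers of nonzero reals. -/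

import Mathlib

set_option maxHeartbeats 1000000


theorem stmt_17 (x y : ℤ → ℝ) (b d : ℝ)
    (hb : b * x 0 * y (-1) ≠ 1) (hd : d * x (-1) * y 0 ≠ 1)
    (hx : ∀ n : ℤ, -1 ≤ n → x n ≠ 0) (hy : ∀ n : ℤ, -1 ≤ n → y n ≠ 0)
    (hda : ∀ n : ℕ, (-1) + b * (x n * y ((n : ℤ) - 1)) ≠ 0)
    (hdc : ∀ n : ℕ, (-1) + d * (x ((n : ℤ) - 1) * y n) ≠ 0)
    (hxe : ∀ n : ℕ, x ((n : ℤ) + 1) =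
      x n * y ((n : ℤ) - 1) / (y n * ((-1) + b * (x n * y ((n : ℤ) - 1)))))
    (hye : ∀ n : ℕ, y ((n : ℤ) + 1) =
      x ((n : ℤ) - 1) * y n / (x n * ((-1) + d * (x ((n : ℤ) - 1) * y n)))) :
    ∀ n : ℕ,
      x (2 * (n : ℤ) - 1) =
        x (-1) ^ (1 - (n : ℤ)) * (x 0 * y (-1) / y 0) ^ n *
          (-1 + b * x 0 * y (-1)) ^ (-(n : ℤ)) ∧
      x (2 * (n : ℤ)) =
        x 0 ^ (n + 1) * (y (-1) / (x (-1) * y 0)) ^ n * (-1 + d * x (-1) * y 0) ^ n ∧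
      y (2 * (n : ℤ) - 1) =
        y (-1) ^ (1 - (n : ℤ)) * (x (-1) * y 0 / x 0) ^ n *
          (-1 + d * x (-1) * y 0) ^ (-(n : ℤ)) ∧
      y (2 * (n : ℤ)) =
        y 0 ^ (n + 1) * (x (-1) / (x 0 * y (-1))) ^ n * (-1 + b * x 0 * y (-1)) ^ n := by
  have hA : (-1 : ℝ) + b * x 0 * y (-1) ≠ 0 := by
    intro h; apply hb; linarith
  have hC : (-1 : ℝ) + d * x (-1) * y 0 ≠ 0 := by
    intro h; apply hd; linarith
  have hA' : (-1 : ℝ) + x 0 * y (-1) * b ≠ 0 := by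
    intro h; apply hb; linarith
  have hC' : (-1 : ℝ) + x (-1) * y 0 * d ≠ 0 := by
    intro h; apply hd; linarith
  have hx0 : x 0 ≠ 0 := hx 0 (by norm_num)
  have hy0 : y 0 ≠ 0 := hy 0 (by norm_num)
  have hxm : x (-1) ≠ 0 := hx (-1) le_rfl
  have hym : y (-1) ≠ 0 := hy (-1) le_rfl
  intro n
  induction n with
  | zero => norm_num
  | succ n ih =>
    obtain ⟨h1, h2, h3, h4⟩ := ih
    -- rewrite zpow exponents in IH into nat powers
    rw [zpow_sub₀ hxm, zpow_one, zpow_natCast, zpow_neg, zpow_natCast] at h1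
    rw [zpow_sub₀ hym, zpow_one, zpow_natCast, zpow_neg, zpow_natCast] at h3
    have hyn : y (2 * (n : ℤ)) ≠ 0 := hy _ (by omega)
    have hxn : x (2 * (n : ℤ)) ≠ 0 := hx _ (by omega)
    have hynm : y (2 * (n : ℤ) - 1) ≠ 0 := hy _ (by omega)
    have hxnm : x (2 * (n : ℤ) - 1) ≠ 0 := hx _ (by omega)
    have hAn : ((-1 : ℝ) + b * x 0 * y (-1)) ^ n ≠ 0 := pow_ne_zero _ hA
    have hCn : ((-1 : ℝ) + d * x (-1) * y 0) ^ n ≠ 0 := pow_ne_zero _ hC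
    -- key products
    have hprodx : x (2 * (n : ℤ)) * y (2 * (n : ℤ) - 1) = x 0 * y (-1) := by
      rw [h2, h3]
      simp only [div_pow, mul_pow, inv_pow]
      field_simp
      ring
    have hprody : x (2 * (n : ℤ) - 1) * y (2 * (n : ℤ)) = x (-1) * y 0 := by
      rw [h1, h4]
      simp only [div_pow, mul_pow, inv_pow]
      field_simp
      ring
    -- recurrence at 2n
    have hxe1 := hxe (2 * n)
    have hye1 := hye (2 * n)
    push_cast at hxe1 hye1
    rw [hprodx] at hxe1
    rw [hprody] at hye1
    have hbr : ((-1 : ℝ) + b * (x 0 * y (-1))) = -1 + b * x 0 * y (-1) := by ring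
    have hcr : ((-1 : ℝ) + d * (x (-1) * y 0)) = -1 + d * x (-1) * y 0 := by ring
    rw [hbr] at hxe1
    rw [hcr] at hye1
    -- hxe1 : x (2n+1) = x 0 * y (-1) / (y (2n) * A)
    -- hye1 : y (2n+1) = x (-1) * y 0 / (x (2n) * C)
    have cx1 : x (2 * (n : ℤ) + 1) =
        x (-1) ^ (1 - ((n + 1 : ℕ) : ℤ)) * (x 0 * y (-1) / y 0) ^ (n + 1) *
          (-1 + b * x 0 * y (-1)) ^ (-((n + 1 : ℕ) : ℤ)) := by
      rw [zpow_sub₀ hxm, zpow_one, zpow_natCast, zpow_neg, zpow_natCast]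
      rw [hxe1, h4]
      simp only [div_pow, mul_pow, inv_pow]
      field_simp
      ring
    have cy1 : y (2 * (n : ℤ) + 1) =
        y (-1) ^ (1 - ((n + 1 : ℕ) : ℤ)) * (x (-1) * y 0 / x 0) ^ (n + 1) *
          (-1 + d * x (-1) * y 0) ^ (-((n + 1 : ℕ) : ℤ)) := by
      rw [zpow_sub₀ hym, zpow_one, zpow_natCast, zpow_neg, zpow_natCast]
      rw [hye1, h2]
      simp only [div_pow, mul_pow, inv_pow]
      field_simp
      ring
    -- recurrence at 2n+1
    have hxe2 := hxe (2 * n + 1)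
    have hye2 := hye (2 * n + 1)
    push_cast at hxe2 hye2
    rw [show (2 * (n : ℤ) + 1 - 1) = 2 * (n : ℤ) by ring] at hxe2 hye2
    have hprodx2 : x (2 * (n : ℤ) + 1) * y (2 * (n : ℤ)) =
        x 0 * y (-1) / (-1 + b * x 0 * y (-1)) := by
      rw [hxe1]; field_simp
    have hprody2 : x (2 * (n : ℤ)) * y (2 * (n : ℤ) + 1) =
        x (-1) * y 0 / (-1 + d * x (-1) * y 0) := by
      rw [hye1]; field_simp
    rw [hprodx2] at hxe2
    rw [hprody2] at hye2
    have hbr2 : ((-1 : ℝ) + b * (x 0 * y (-1) / (-1 + b * x 0 * y (-1)))) =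
        1 / (-1 + b * x 0 * y (-1)) := by
      field_simp
      ring
    have hcr2 : ((-1 : ℝ) + d * (x (-1) * y 0 / (-1 + d * x (-1) * y 0))) =
        1 / (-1 + d * x (-1) * y 0) := by
      field_simp
      ring
    rw [hbr2] at hxe2
    rw [hcr2] at hye2
    have hyn1 : y (2 * (n : ℤ) + 1) ≠ 0 := hy _ (by omega)
    have hxn1 : x (2 * (n : ℤ) + 1) ≠ 0 := hx _ (by omega)
    have hxe2' : x (2 * (n : ℤ) + 1 + 1) = x 0 * y (-1) / y (2 * (n : ℤ) + 1) := by
      rw [hxe2]; field_simp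
    have hye2' : y (2 * (n : ℤ) + 1 + 1) = x (-1) * y 0 / x (2 * (n : ℤ) + 1) := by
      rw [hye2]; field_simp
    have cx2 : x (2 * (n : ℤ) + 1 + 1) =
        x 0 ^ (n + 1 + 1) * (y (-1) / (x (-1) * y 0)) ^ (n + 1) *
          (-1 + d * x (-1) * y 0) ^ (n + 1) := by
      rw [hxe2', cy1]
      rw [zpow_sub₀ hym, zpow_one, zpow_natCast, zpow_neg, zpow_natCast]
      simp only [div_pow, mul_pow, inv_pow]
      field_simp
      ring
    have cy2 : y (2 * (n : ℤ) + 1 + 1) =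
        y 0 ^ (n + 1 + 1) * (x (-1) / (x 0 * y (-1))) ^ (n + 1) *
          (-1 + b * x 0 * y (-1)) ^ (n + 1) := by
      rw [hye2', cx1]
      rw [zpow_sub₀ hxm, zpow_one, zpow_natCast, zpow_neg, zpow_natCast]
      simp only [div_pow, mul_pow, inv_pow]
      field_simp
      ring
    refine ⟨?_, ?_, ?_, ?_⟩
    · rw [show (2 * ((n + 1 : ℕ) : ℤ) - 1) = 2 * (n : ℤ) + 1 by push_cast; ring]
      exact cx1
    · rw [show (2 * ((n + 1 : ℕ) : ℤ)) = 2 * (n : ℤ) + 1 + 1 by push_cast; ring]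
      exact cx2
    · rw [show (2 * ((n + 1 : ℕ) : ℤ) - 1) = 2 * (n : ℤ) + 1 by push_cast; ring]
      exact cy1
    · rw [show (2 * ((n + 1 : ℕ) : ℤ)) = 2 * (n : ℤ) + 1 + 1 by push_cast; ring]
      exact cy2
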